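/- arXiv:1801.06897 — 3 statements merged into one kernel-verified Lean document; each statement's English description precedes it below -/
import Mathlib

section
/- (First-order condition, formula (A.3).) Fix n ≥ 1, σ > 0, μ ∈ ℝ, ρ = μ/σ, p = Φ(ρ), q = Φ(−ρ), f = φ(ρ), ν = σ·f/√(q·p·n). Define g : ℝ → ℝ by g(α) = μ·Φ(τ(α)) + ν·φ(τ(α)), where τ(α) = (p − α)·√(n/(q·p)). Then for every α ∈ ℝ, g′(α) = 0 if and only if −ρ = (α − p)·f/(q·p), i.e., if and only if α = α̂₀ := p·(1 − q·ρ/f). In particular, α̂₀ is the unique critical point of g. -/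
open MeasureTheory ProbabilityTheory

/-- The standard normal density φ(t) = (2π)^{-1/2} e^{-t²/2}. -/
noncomputable def stdNormalPDF (t : ℝ) : ℝ :=
  (Real.sqrt (2 * Real.pi))⁻¹ * Real.exp (-t ^ 2 / 2)

/-- The standard normal distribution function Φ(x) = ∫_{-∞}^x φ(t) dt. -/
noncomputable def stdNormalCDF (x : ℝ) : ℝ :=
  ∫ t in Set.Iic x, stdNormalPDF t

lemma stdNormalPDF_pos (t : ℝ) : 0 < stdNormalPDF t := by
  unfold stdNormalPDF
  positivity

lemma continuous_stdNormalPDF : Continuous stdNormalPDF := by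
  unfold stdNormalPDF
  continuity

lemma integrable_stdNormalPDF : Integrable stdNormalPDF := by
  have h : stdNormalPDF = fun t => (Real.sqrt (2 * Real.pi))⁻¹ * Real.exp (-(1/2) * t ^ 2) := by
    funext t; unfold stdNormalPDF; ring_nf
  rw [h]
  exact (integrable_exp_neg_mul_sq (by norm_num : (0:ℝ) < 1/2)).const_mul _

lemma stdNormalCDF_pos (x : ℝ) : 0 < stdNormalCDF x := by
  unfold stdNormalCDF
  rw [setIntegral_pos_iff_support_of_nonneg_ae
    (Filter.Eventually.of_forall fun t => (stdNormalPDF_pos t).le)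
    integrable_stdNormalPDF.integrableOn]
  have : Function.support stdNormalPDF = Set.univ := by
    ext t; simp [Function.mem_support, (stdNormalPDF_pos t).ne']
  rw [this, Set.univ_inter]
  simp

lemma hasDerivAt_stdNormalCDF (x : ℝ) : HasDerivAt stdNormalCDF (stdNormalPDF x) x := by
  have key : stdNormalCDF = fun y => stdNormalCDF 0 + ∫ t in (0:ℝ)..y, stdNormalPDF t := by
    funext y
    have h := intervalIntegral.integral_Iic_sub_Iic
      integrable_stdNormalPDF.integrableOn integrable_stdNormalPDF.integrableOn
      (a := 0) (b := y)
    unfold stdNormalCDF at *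
    linarith
  rw [key]
  exact (intervalIntegral.integral_hasDerivAt_right
    (continuous_stdNormalPDF.intervalIntegrable _ _)
    (continuous_stdNormalPDF.stronglyMeasurableAtFilter _ _)
    continuous_stdNormalPDF.continuousAt).const_add _

lemma hasDerivAt_stdNormalPDF (x : ℝ) :
    HasDerivAt stdNormalPDF (-x * stdNormalPDF x) x := by
  have h1 : HasDerivAt (fun t : ℝ => -t ^ 2 / 2) (-x) x := by
    have := ((hasDerivAt_pow 2 x).neg).div_const 2
    refine this.congr_deriv ?_; norm_num; ring
  have h2 := (h1.exp).const_mul (Real.sqrt (2 * Real.pi))⁻¹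
  have : stdNormalPDF = fun t => (Real.sqrt (2 * Real.pi))⁻¹ * Real.exp (-t ^ 2 / 2) := rfl
  rw [this]
  refine h2.congr_deriv ?_
  beta_reduce; ring

/-- First-order condition (A.3): the derivative of the smoothed expected
increment vanishes exactly at α̂₀ = p(1 − qρ/f), the unique critical point. -/
theorem first_order_condition
    (n : ℕ) (hn : 1 ≤ n) (μ σ : ℝ) (hσ : 0 < σ)
    (ρ p q f ν : ℝ) (hρ : ρ = μ / σ) (hp : p = stdNormalCDF ρ) (hq : q = stdNormalCDF (-ρ))
    (hf : f = stdNormalPDF ρ) (hν : ν = σ * f / Real.sqrt (q * p * n))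
    (τ g : ℝ → ℝ)
    (hτ : ∀ α, τ α = (p - α) * Real.sqrt (n / (q * p)))
    (hg : ∀ α, g α = μ * stdNormalCDF (τ α) + ν * stdNormalPDF (τ α))
    (α : ℝ) :
    (deriv g α = 0 ↔ -ρ = (α - p) * f / (q * p)) ∧
      (deriv g α = 0 ↔ α = p * (1 - q * ρ / f)) := by
  have hp0 : 0 < p := hp ▸ stdNormalCDF_pos ρ
  have hq0 : 0 < q := hq ▸ stdNormalCDF_pos (-ρ)
  have hf0 : 0 < f := hf ▸ stdNormalPDF_pos ρ
  have hqp : 0 < q * p := mul_pos hq0 hp0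
  have hn0 : (0:ℝ) < n := by exact_mod_cast Nat.lt_of_lt_of_le Nat.zero_lt_one hn
  set c := Real.sqrt (n / (q * p)) with hc_def
  have hc : 0 < c := Real.sqrt_pos.mpr (div_pos hn0 hqp)
  -- derivative of τ
  have hτ' : HasDerivAt τ (-c) α := by
    have : HasDerivAt (fun a : ℝ => (p - a) * c) (-1 * c) α :=
      ((hasDerivAt_id α).const_sub p).mul_const c
    have heq : τ = fun a : ℝ => (p - a) * c := funext hτ
    rw [heq]
    convert this using 1; ring
  have hΦ := (hasDerivAt_stdNormalCDF (τ α)).comp α hτ'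
  have hφ := (hasDerivAt_stdNormalPDF (τ α)).comp α hτ'
  have hg' : HasDerivAt g
      (μ * (stdNormalPDF (τ α) * (-c)) + ν * (-(τ α) * stdNormalPDF (τ α) * (-c))) α := by
    have heq : g = fun a => μ * stdNormalCDF (τ a) + ν * stdNormalPDF (τ a) := funext hg
    rw [heq]
    exact (hΦ.const_mul μ).add (hφ.const_mul ν)
  have hderiv : deriv g α = c * stdNormalPDF (τ α) * (ν * τ α - μ) := by
    rw [hg'.deriv]; ring
  -- ν * τ α = σ * f * (p - α) / (q * p)
  have hsqrt : c / Real.sqrt (q * p * n) = 1 / (q * p) := by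
    rw [hc_def, ← Real.sqrt_div (by positivity : (0:ℝ) ≤ (n:ℝ) / (q * p))]
    have h1 : (n:ℝ) / (q * p) / (q * p * n) = (1 / (q * p)) ^ 2 := by
      field_simp
    rw [h1, Real.sqrt_sq (by positivity)]
  have hντ : ν * τ α = σ * f * (p - α) / (q * p) := by
    rw [hν, hτ]
    have : σ * f / Real.sqrt (q * p * ↑n) * ((p - α) * c)
        = σ * f * (p - α) * (c / Real.sqrt (q * p * ↑n)) := by ring
    rw [this, hsqrt]; ring
  have hmain : deriv g α = 0 ↔ ν * τ α - μ = 0 := by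
    rw [hderiv]
    constructor
    · intro h
      rcases mul_eq_zero.mp h with h' | h'
      · exact absurd h' (mul_pos hc (stdNormalPDF_pos _)).ne'
      · exact h'
    · intro h; rw [h, mul_zero]
  have hσ' : σ ≠ 0 := hσ.ne'
  have hf' : f ≠ 0 := hf0.ne'
  have iff1 : deriv g α = 0 ↔ -ρ = (α - p) * f / (q * p) := by
    rw [hmain, hρ, sub_eq_zero, hντ]
    constructor
    · intro h
      field_simp at h ⊢
      linarith
    · intro h
      field_simp at h ⊢
      linarith
  refine ⟨iff1, ?_⟩
  rw [iff1]
  constructor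
  · intro h
    field_simp at h ⊢
    linarith
  · intro h
    field_simp at h ⊢
    linarith
end

section
/- (Negativity of the derivative of the optimal threshold.) For every ρ ∈ ℝ, ( φ(ρ) + Φ(ρ)·ρ )·( φ(ρ) − Φ(−ρ)·ρ ) < Φ(ρ)·Φ(−ρ). Equivalently, the derivative dα̂₀(ρ)/dρ = ( (f + p·ρ)·(f − q·ρ) − q·p ) / f of the estimated optimal acceptance threshold α̂₀(ρ) = Φ(ρ)·(1 − ρ·Φ(−ρ)/φ(ρ)) is strictly negative for all ρ, where p = Φ(ρ), q = Φ(−ρ), f = φ(ρ). -/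
open MeasureTheory ProbabilityTheory

open Real Set Filter Topology

set_option linter.unusedSectionVars false

namespace OptThr


lemma sqrt_two_pi_pos : 0 < Real.sqrt (2 * Real.pi) :=
  Real.sqrt_pos.mpr (by positivity)

lemma F_pos (t : ℝ) : 0 < stdNormalPDF t := by
  unfold stdNormalPDF
  positivity

lemma F_even (t : ℝ) : stdNormalPDF (-t) = stdNormalPDF t := by
  unfold stdNormalPDF; ring_nf

lemma F_eq : stdNormalPDF = fun t : ℝ =>
    (Real.sqrt (2 * Real.pi))⁻¹ * Real.exp (-(1/2 : ℝ) * t ^ 2) := by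
  funext t; unfold stdNormalPDF; ring_nf

lemma integrable_F : Integrable stdNormalPDF := by
  rw [F_eq]
  exact (integrable_exp_neg_mul_sq (by norm_num : (0:ℝ) < 1/2)).const_mul _

lemma continuous_F : Continuous stdNormalPDF := by
  rw [F_eq]
  continuity

lemma integrable_id_mul_F : Integrable (fun t : ℝ => t * stdNormalPDF t) := by
  have h := (integrable_mul_exp_neg_mul_sq (by norm_num : (0:ℝ) < 1/2)).const_mul
    ((Real.sqrt (2 * Real.pi))⁻¹)
  refine h.congr ?_
  filter_upwards with t
  rw [F_eq]; ring

lemma integral_F : ∫ t : ℝ, stdNormalPDF t = 1 := by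
  rw [F_eq, MeasureTheory.integral_const_mul]
  have h : ∫ t : ℝ, Real.exp (-(1/2 : ℝ) * t ^ 2) = Real.sqrt (Real.pi / (1/2)) :=
    integral_gaussian (1/2)
  rw [h]
  have : Real.pi / (1/2) = 2 * Real.pi := by ring
  rw [this, inv_mul_cancel₀ (ne_of_gt sqrt_two_pi_pos)]

lemma hasDerivAt_F (t : ℝ) : HasDerivAt stdNormalPDF (-t * stdNormalPDF t) t := by
  have h1 : HasDerivAt (fun t : ℝ => -t ^ 2 / 2) (-t) t := by
    have := ((hasDerivAt_pow 2 t).neg).div_const 2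
    exact this.congr_deriv (by push_cast; ring)
  have h2 := (h1.exp).const_mul ((Real.sqrt (2 * Real.pi))⁻¹)
  have : stdNormalPDF = fun t : ℝ => (Real.sqrt (2 * Real.pi))⁻¹ * Real.exp (-t ^ 2 / 2) := rfl
  rw [this]
  refine h2.congr_deriv ?_
  show _ = -t * ((Real.sqrt (2 * Real.pi))⁻¹ * Real.exp (-t ^ 2 / 2))
  ring



lemma P_eq (x : ℝ) :
    stdNormalCDF x = stdNormalCDF 0 + ∫ t in (0:ℝ)..x, stdNormalPDF t := by
  rw [← intervalIntegral.integral_Iic_sub_Iic integrable_F.integrableOn integrable_F.integrableOn]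
  unfold stdNormalCDF; ring

lemma hasDerivAt_P (x : ℝ) : HasDerivAt stdNormalCDF (stdNormalPDF x) x := by
  have h : HasDerivAt (fun u => ∫ t in (0:ℝ)..u, stdNormalPDF t) (stdNormalPDF x) x :=
    intervalIntegral.integral_hasDerivAt_right (continuous_F.intervalIntegrable _ _)
      (continuous_F.stronglyMeasurableAtFilter _ _)
      continuous_F.continuousAt
  have h2 := h.const_add (stdNormalCDF 0)
  exact h2.congr_of_eventuallyEq (Eventually.of_forall fun y => P_eq y)

lemma hasDerivAt_Q (x : ℝ) :
    HasDerivAt (fun x => stdNormalCDF (-x)) (-stdNormalPDF x) x := by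
  have h := (hasDerivAt_P (-x)).comp x (hasDerivAt_neg x)
  simpa [F_even, Function.comp_def] using h

lemma continuous_P : Continuous stdNormalCDF :=
  continuous_iff_continuousAt.mpr fun x => (hasDerivAt_P x).continuousAt

lemma Q_eq (x : ℝ) : stdNormalCDF (-x) = ∫ t in Ioi x, stdNormalPDF t := by
  unfold stdNormalCDF
  have h1 : ∫ t in Iic (-x), stdNormalPDF t = ∫ t in Iic (-x), stdNormalPDF (-t) := by
    simp [F_even]
  rw [h1, integral_comp_neg_Iic, neg_neg]

lemma P_add_Q (x : ℝ) : stdNormalCDF x + stdNormalCDF (-x) = 1 := by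
  rw [Q_eq]
  unfold stdNormalCDF
  rw [intervalIntegral.integral_Iic_add_Ioi integrable_F.integrableOn integrable_F.integrableOn, integral_F]

lemma P_pos (x : ℝ) : 0 < stdNormalCDF x := by
  have h1 : stdNormalCDF x - stdNormalCDF (x - 1) = ∫ t in (x-1)..x, stdNormalPDF t := by
    rw [← intervalIntegral.integral_Iic_sub_Iic integrable_F.integrableOn integrable_F.integrableOn]
    rfl
  have h2 : 0 < ∫ t in (x-1)..x, stdNormalPDF t := by
    apply intervalIntegral.intervalIntegral_pos_of_pos
      (continuous_F.intervalIntegrable _ _) (fun t => F_pos t) (by linarith)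
  have h3 : 0 ≤ stdNormalCDF (x - 1) :=
    setIntegral_nonneg measurableSet_Iic fun t _ => (F_pos t).le
  linarith

lemma P_lt_one (x : ℝ) : stdNormalCDF x < 1 := by
  have := P_add_Q x
  have := P_pos (-x)
  linarith

lemma integral_Ioi_id_mul_F (x : ℝ) :
    ∫ t in Ioi x, t * stdNormalPDF t = stdNormalPDF x := by
  have tendF : Tendsto (fun t : ℝ => -stdNormalPDF t) atTop (𝓝 0) := by
    have h1 : Tendsto (fun t : ℝ => -t ^ 2 / 2) atTop atBot := by
      apply Tendsto.atBot_div_const (by norm_num : (0:ℝ) < 2)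
      exact tendsto_neg_atBot_iff.mpr (tendsto_pow_atTop two_ne_zero)
    have h2 : Tendsto (fun t : ℝ => Real.exp (-t ^ 2 / 2)) atTop (𝓝 0) :=
      Real.tendsto_exp_atBot.comp h1
    have h3 := (h2.const_mul ((Real.sqrt (2 * Real.pi))⁻¹)).neg
    simpa [stdNormalPDF] using h3
  have h := integral_Ioi_of_hasDerivAt_of_tendsto
    (f := fun t => -stdNormalPDF t) (f' := fun t => t * stdNormalPDF t) (a := x)
    (continuous_F.neg.continuousWithinAt)
    (fun t _ => by exact (hasDerivAt_F t).neg.congr_deriv (by ring))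
    integrable_id_mul_F.integrableOn tendF
  rw [h]; ring



lemma tendsto_pow_mul_F (k : ℕ) :
    Tendsto (fun x : ℝ => x ^ k * stdNormalPDF x) atTop (𝓝 0) := by
  have h := rpow_mul_exp_neg_mul_sq_isLittleO_exp_neg (by norm_num : (0:ℝ) < 1/2) (k : ℝ)
  have h2 : Tendsto (fun x : ℝ => Real.exp (-(1/2 : ℝ) * x)) atTop (𝓝 0) := by
    apply Real.tendsto_exp_atBot.comp
    have h1 : Tendsto (fun x : ℝ => (1/2 : ℝ) * x) atTop atTop :=
      tendsto_id.const_mul_atTop (by norm_num : (0:ℝ) < 1/2)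
    exact (tendsto_neg_atBot_iff.mpr h1).congr (fun x => by ring)
  have h3 : Tendsto (fun x : ℝ => x ^ (k:ℝ) * Real.exp (-(1/2:ℝ) * x ^ 2)) atTop (𝓝 0) :=
    h.trans_tendsto h2
  have h4 := h3.const_mul ((Real.sqrt (2 * Real.pi))⁻¹)
  rw [mul_zero] at h4
  apply h4.congr'
  filter_upwards [eventually_ge_atTop (0:ℝ)] with x hx
  rw [Real.rpow_natCast]
  unfold stdNormalPDF
  rw [show -x^2/2 = -(1/2:ℝ)*x^2 by ring]
  ring

lemma mills (x : ℝ) (hx : 0 < x) : x * stdNormalCDF (-x) ≤ stdNormalPDF x := by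
  rw [← integral_Ioi_id_mul_F x, Q_eq, ← integral_const_mul]
  apply setIntegral_mono_on ((integrable_F.const_mul x).integrableOn)
    integrable_id_mul_F.integrableOn measurableSet_Ioi
  intro t ht
  have : x ≤ t := (le_of_lt ht)
  nlinarith [F_pos t, (F_pos t).le]

lemma tendsto_xQ : Tendsto (fun x : ℝ => x * stdNormalCDF (-x)) atTop (𝓝 0) := by
  apply squeeze_zero' (g := stdNormalPDF)
  · filter_upwards [eventually_gt_atTop (0:ℝ)] with x hx
    exact mul_nonneg hx.le (P_pos (-x)).le
  · filter_upwards [eventually_gt_atTop (0:ℝ)] with x hx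
    exact mills x hx
  · simpa using tendsto_pow_mul_F 0

lemma tendsto_Q : Tendsto (fun x : ℝ => stdNormalCDF (-x)) atTop (𝓝 0) := by
  apply squeeze_zero' (g := fun x : ℝ => x * stdNormalCDF (-x))
  · filter_upwards with x; exact (P_pos (-x)).le
  · filter_upwards [eventually_ge_atTop (1:ℝ)] with x hx
    nlinarith [(P_pos (-x)).le]
  · exact tendsto_xQ

lemma tendsto_x2Q : Tendsto (fun x : ℝ => x ^ 2 * stdNormalCDF (-x)) atTop (𝓝 0) := by
  apply squeeze_zero' (g := fun x : ℝ => x * stdNormalPDF x)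
  · filter_upwards [eventually_gt_atTop (0:ℝ)] with x hx
    exact mul_nonneg (by positivity) (P_pos (-x)).le
  · filter_upwards [eventually_gt_atTop (0:ℝ)] with x hx
    have := mills x hx
    nlinarith
  · simpa using tendsto_pow_mul_F 1

lemma tendsto_P : Tendsto stdNormalCDF atTop (𝓝 1) := by
  have h := (tendsto_const_nhds (x := (1:ℝ)) (f := atTop)).sub tendsto_Q
  rw [sub_zero] at h
  apply h.congr
  intro x
  have := P_add_Q x; linarith



noncomputable def W (x : ℝ) : ℝ :=
  stdNormalCDF (-x) - stdNormalCDF x + 4 * x * stdNormalPDF x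
noncomputable def N (x : ℝ) : ℝ :=
  stdNormalCDF x * stdNormalCDF (-x) - 2 * stdNormalPDF x ^ 2
noncomputable def M (x : ℝ) : ℝ :=
  stdNormalPDF x * (stdNormalCDF (-x) - stdNormalCDF x)
    + x * stdNormalCDF x * stdNormalCDF (-x)
noncomputable def H (x : ℝ) : ℝ :=
  stdNormalCDF x * stdNormalCDF (-x)
    - (stdNormalPDF x + x * stdNormalCDF x) * (stdNormalPDF x - x * stdNormalCDF (-x))

lemma hasDerivAt_W (x : ℝ) :
    HasDerivAt W (2 * stdNormalPDF x * (1 - 2 * x ^ 2)) x := by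
  have h := ((hasDerivAt_Q x).sub (hasDerivAt_P x)).add
    (((hasDerivAt_id x).const_mul (4:ℝ)).mul (hasDerivAt_F x))
  refine h.congr_deriv ?_
  simp only [id_eq]; ring

lemma hasDerivAt_N (x : ℝ) :
    HasDerivAt N (stdNormalPDF x * W x) x := by
  have h := ((hasDerivAt_P x).mul (hasDerivAt_Q x)).sub
    (((hasDerivAt_F x).pow 2).const_mul (2:ℝ))
  refine h.congr_deriv ?_
  unfold W; push_cast; ring

lemma hasDerivAt_M (x : ℝ) : HasDerivAt M (N x) x := by
  have h := ((hasDerivAt_F x).mul ((hasDerivAt_Q x).sub (hasDerivAt_P x))).add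
    ((((hasDerivAt_id x).mul (hasDerivAt_P x)).mul (hasDerivAt_Q x)))
  refine h.congr_deriv ?_
  unfold N; simp only [id_eq, Pi.sub_apply, Pi.mul_apply, Pi.add_apply]; ring

lemma hasDerivAt_H (x : ℝ) : HasDerivAt H (2 * M x) x := by
  have h := ((hasDerivAt_P x).mul (hasDerivAt_Q x)).sub
    (((hasDerivAt_F x).add ((hasDerivAt_id x).mul (hasDerivAt_P x))).mul
      ((hasDerivAt_F x).sub ((hasDerivAt_id x).mul (hasDerivAt_Q x))))
  refine h.congr_deriv ?_
  unfold M; simp only [id_eq, Pi.sub_apply, Pi.mul_apply, Pi.add_apply]; ring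

lemma P_zero : stdNormalCDF 0 = 1 / 2 := by
  have := P_add_Q 0
  rw [neg_zero] at this
  linarith

lemma F_zero_sq : stdNormalPDF 0 ^ 2 = (2 * Real.pi)⁻¹ := by
  unfold stdNormalPDF
  rw [show -(0:ℝ)^2/2 = 0 by norm_num, Real.exp_zero, mul_one, ← Real.sqrt_inv]
  exact Real.sq_sqrt (by positivity)

lemma N_zero_neg : N 0 < 0 := by
  unfold N
  rw [neg_zero, P_zero, F_zero_sq]
  have hpi : Real.pi < 4 := by linarith [Real.pi_lt_d2]
  have hpi0 : 0 < Real.pi := Real.pi_pos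
  rw [div_mul_div_comm, mul_inv]
  have : (4:ℝ)⁻¹ < Real.pi⁻¹ := by
    apply inv_strictAnti₀ hpi0 hpi
  nlinarith [this]

lemma F_le (x : ℝ) : stdNormalPDF x ≤ 1/2 * Real.exp (-x^2/2) := by
  unfold stdNormalPDF
  have h2 : (2:ℝ) ≤ Real.sqrt (2 * Real.pi) := by
    have hs := Real.sq_sqrt (show (0:ℝ) ≤ 2 * Real.pi by positivity)
    have hnn := Real.sqrt_nonneg (2 * Real.pi)
    nlinarith [Real.pi_gt_three]
  have : (Real.sqrt (2 * Real.pi))⁻¹ ≤ 1/2 := by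
    rw [inv_le_comm₀ (by linarith) (by norm_num)]
    linarith
  have he : (0:ℝ) < Real.exp (-x^2/2) := Real.exp_pos _
  nlinarith

lemma F_three_lt : stdNormalPDF 3 < 3 / 38 := by
  have h1 := F_le 3
  have h2 : Real.exp (-(3:ℝ)^2/2) < (7:ℝ)⁻¹ := by
    rw [show (-(3:ℝ)^2/2) = -(9/2) by norm_num, Real.exp_neg]
    apply inv_strictAnti₀ (by norm_num)
    have : Real.exp 2 ≤ Real.exp (9/2) := Real.exp_le_exp.mpr (by norm_num)
    have h3 : (2.7:ℝ) < Real.exp 1 := by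
      have := Real.exp_one_gt_d9; linarith
    have : (7:ℝ) < Real.exp 2 := by
      rw [show (2:ℝ) = 1 + 1 by norm_num, Real.exp_add]
      nlinarith
    linarith
  nlinarith

lemma W_three_neg : W 3 < 0 := by
  unfold W
  have hm := mills 3 (by norm_num)
  have hpq := P_add_Q 3
  have hF := F_three_lt
  have := F_pos 3
  nlinarith

lemma W_zero : W 0 = 0 := by
  unfold W; rw [neg_zero]; ring



lemma tendsto_F : Tendsto stdNormalPDF atTop (𝓝 0) := by
  have := tendsto_pow_mul_F 0
  simpa using this

lemma tendsto_xF : Tendsto (fun x : ℝ => x * stdNormalPDF x) atTop (𝓝 0) := by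
  have := tendsto_pow_mul_F 1
  simpa using this

lemma tendsto_N : Tendsto N atTop (𝓝 0) := by
  have h := (tendsto_P.mul tendsto_Q).sub ((tendsto_F.mul tendsto_F).const_mul 2)
  simp only [mul_zero, zero_mul, one_mul, sub_zero] at h
  apply h.congr
  intro x; unfold N; ring

lemma tendsto_M : Tendsto M atTop (𝓝 0) := by
  have h := (tendsto_F.mul (tendsto_Q.sub tendsto_P)).add (tendsto_xQ.mul tendsto_P)
  simp only [mul_zero, zero_mul, mul_one, sub_zero, add_zero, zero_add] at h
  apply h.congr
  intro x; unfold M; ring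

lemma tendsto_H : Tendsto H atTop (𝓝 0) := by
  have h := ((((tendsto_P.mul tendsto_Q).sub (tendsto_F.mul tendsto_F)).add
    (tendsto_xF.mul tendsto_Q)).sub (tendsto_xF.mul tendsto_P)).add
    (tendsto_x2Q.mul tendsto_P)
  simp only [mul_zero, zero_mul, mul_one, sub_zero, add_zero, zero_add] at h
  apply h.congr
  intro x; unfold H; ring

noncomputable def sa : ℝ := Real.sqrt (1/2)

lemma sa_sq : sa ^ 2 = 1/2 := Real.sq_sqrt (by norm_num)
lemma sa_pos : 0 < sa := Real.sqrt_pos.mpr (by norm_num)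
lemma sa_le_three : sa ≤ 3 := by
  nlinarith [sa_sq, sa_pos]

lemma W_mono : MonotoneOn W (Icc 0 sa) := by
  apply monotoneOn_of_deriv_nonneg (convex_Icc _ _)
    (fun x _ => (hasDerivAt_W x).continuousAt.continuousWithinAt)
    (fun x _ => (hasDerivAt_W x).differentiableAt.differentiableWithinAt)
  intro x hx
  rw [interior_Icc] at hx
  rw [(hasDerivAt_W x).deriv]
  have h1 : x ^ 2 < 1/2 := by nlinarith [hx.1, hx.2, sa_sq]
  have := F_pos x
  nlinarith

lemma W_anti : StrictAntiOn W (Ici sa) := by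
  apply strictAntiOn_of_deriv_neg (convex_Ici _)
    (fun x _ => (hasDerivAt_W x).continuousAt.continuousWithinAt)
  intro x hx
  rw [interior_Ici] at hx
  rw [(hasDerivAt_W x).deriv]
  have h1 : 1/2 < x ^ 2 := by nlinarith [sa_sq, sa_pos, hx.out]
  have := F_pos x
  nlinarith

lemma exists_z : ∃ z : ℝ, sa ≤ z ∧ z ≤ 3 ∧ W z = 0 := by
  have hWa : 0 ≤ W sa := by
    have := W_mono (show (0:ℝ) ∈ Icc 0 sa from ⟨le_refl _, sa_pos.le⟩)
      (show sa ∈ Icc 0 sa from ⟨sa_pos.le, le_refl _⟩) sa_pos.le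
    rw [W_zero] at this; exact this
  have hsub := intermediate_value_Icc' sa_le_three
    (fun x _ => (hasDerivAt_W x).continuousAt.continuousWithinAt)
  have h0 : (0:ℝ) ∈ Icc (W 3) (W sa) := ⟨W_three_neg.le, hWa⟩
  obtain ⟨z, hz, hWz⟩ := hsub h0
  exact ⟨z, hz.1, hz.2, hWz⟩

section Main

variable {z : ℝ} (hsz : sa ≤ z) (hz3 : z ≤ 3) (hWz : W z = 0)

include hsz hWz

lemma z_pos : 0 < z := lt_of_lt_of_le sa_pos hsz

lemma W_nonneg : ∀ t ∈ Icc (0:ℝ) z, 0 ≤ W t := by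
  intro t ht
  rcases le_total t sa with h | h
  · have := W_mono (show (0:ℝ) ∈ Icc 0 sa from ⟨le_refl _, sa_pos.le⟩)
      (show t ∈ Icc 0 sa from ⟨ht.1, h⟩) ht.1
    rw [W_zero] at this; exact this
  · rcases eq_or_lt_of_le ht.2 with h2 | h2
    · rw [h2, hWz]
    · have := W_anti (show t ∈ Ici sa from h) (show z ∈ Ici sa from hsz) h2
      rw [hWz] at this; exact this.le

lemma W_neg : ∀ t, z < t → W t < 0 := by
  intro t ht
  have := W_anti (show z ∈ Ici sa from hsz) (show t ∈ Ici sa from le_trans hsz ht.le) ht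
  rw [hWz] at this; exact this

lemma N_mono : MonotoneOn N (Icc 0 z) := by
  apply monotoneOn_of_deriv_nonneg (convex_Icc _ _)
    (fun x _ => (hasDerivAt_N x).continuousAt.continuousWithinAt)
    (fun x _ => (hasDerivAt_N x).differentiableAt.differentiableWithinAt)
  intro x hx
  rw [interior_Icc] at hx
  rw [(hasDerivAt_N x).deriv]
  exact mul_nonneg (F_pos x).le (W_nonneg hsz hWz x ⟨hx.1.le, hx.2.le⟩)

lemma N_anti : StrictAntiOn N (Ici z) := by
  apply strictAntiOn_of_deriv_neg (convex_Ici _)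
    (fun x _ => (hasDerivAt_N x).continuousAt.continuousWithinAt)
  intro x hx
  rw [interior_Ici] at hx
  rw [(hasDerivAt_N x).deriv]
  exact mul_neg_of_pos_of_neg (F_pos x) (W_neg hsz hWz x hx)

lemma N_pos_of_ge : ∀ t, z ≤ t → 0 < N t := by
  intro t ht
  have h1 : N (t + 1) ≤ N t := by
    apply (N_anti hsz hWz).antitoneOn (show t ∈ Ici z from ht)
      (show t + 1 ∈ Ici z from by simp only [mem_Ici]; linarith) (by linarith)
  have h2 : 0 ≤ N (t + 1) := by
    apply le_of_tendsto tendsto_N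
    filter_upwards [eventually_ge_atTop (t + 1)] with s hs
    exact (N_anti hsz hWz).antitoneOn (show t + 1 ∈ Ici z from by simp only [mem_Ici]; linarith)
      (show s ∈ Ici z from by simp only [mem_Ici]; linarith) hs
  have h3 : N (t + 1) < N t :=
    (N_anti hsz hWz) (show t ∈ Ici z from ht)
      (show t + 1 ∈ Ici z from by simp only [mem_Ici]; linarith) (by linarith)
  linarith

lemma exists_x1 : ∃ x1 : ℝ, x1 ∈ Icc 0 z ∧ N x1 = 0 := by
  have hz0 : (0:ℝ) ≤ z := (z_pos hsz hWz).le
  have hsub := intermediate_value_Icc hz0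
    (fun x _ => (hasDerivAt_N x).continuousAt.continuousWithinAt)
  have h0 : (0:ℝ) ∈ Icc (N 0) (N z) := ⟨N_zero_neg.le, (N_pos_of_ge hsz hWz z (le_refl z)).le⟩
  obtain ⟨x1, hx1, hNx1⟩ := hsub h0
  exact ⟨x1, hx1, hNx1⟩

variable {x1 : ℝ} (hx1 : x1 ∈ Icc 0 z) (hNx1 : N x1 = 0)

include hx1 hNx1

lemma M_zero : M 0 = 0 := by unfold M; rw [neg_zero]; ring

lemma M_nonpos : ∀ t, 0 ≤ t → M t ≤ 0 := by
  intro t ht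
  rcases le_total t x1 with h | h
  · -- antitone on Icc 0 x1, M 0 = 0
    have manti : AntitoneOn M (Icc 0 x1) := by
      apply antitoneOn_of_deriv_nonpos (convex_Icc _ _)
        (fun x _ => (hasDerivAt_M x).continuousAt.continuousWithinAt)
        (fun x _ => (hasDerivAt_M x).differentiableAt.differentiableWithinAt)
      intro x hx
      rw [interior_Icc] at hx
      rw [(hasDerivAt_M x).deriv]
      have := N_mono hsz hWz (show x ∈ Icc 0 z from ⟨hx.1.le, (lt_of_lt_of_le hx.2 hx1.2).le⟩)
        hx1 hx.2.le
      rw [hNx1] at this; exact this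
    have := manti (show (0:ℝ) ∈ Icc 0 x1 from ⟨le_refl _, le_trans ht h⟩)
      (show t ∈ Icc 0 x1 from ⟨ht, h⟩) ht
    rw [M_zero hsz hWz hx1 hNx1] at this; exact this
  · -- monotone on Ici x1 with limit 0
    have mmono : MonotoneOn M (Ici x1) := by
      apply monotoneOn_of_deriv_nonneg (convex_Ici _)
        (fun x _ => (hasDerivAt_M x).continuousAt.continuousWithinAt)
        (fun x _ => (hasDerivAt_M x).differentiableAt.differentiableWithinAt)
      intro x hx
      rw [interior_Ici] at hx
      rw [(hasDerivAt_M x).deriv]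
      rcases le_total x z with hxz | hxz
      · have := N_mono hsz hWz (show x1 ∈ Icc 0 z from hx1)
          (show x ∈ Icc 0 z from ⟨le_trans hx1.1 hx.out.le, hxz⟩) hx.out.le
        rw [hNx1] at this; exact this
      · exact (N_pos_of_ge hsz hWz x hxz).le
    apply ge_of_tendsto tendsto_M
    filter_upwards [eventually_ge_atTop t] with s hs
    exact mmono (show t ∈ Ici x1 from h) (show s ∈ Ici x1 from le_trans h hs) hs

lemma M_neg_of_ge : ∀ t, z ≤ t → M t < 0 := by
  intro t ht
  have msm : StrictMonoOn M (Ici z) := by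
    apply strictMonoOn_of_deriv_pos (convex_Ici _)
      (fun x _ => (hasDerivAt_M x).continuousAt.continuousWithinAt)
    intro x hx
    rw [interior_Ici] at hx
    rw [(hasDerivAt_M x).deriv]
    exact N_pos_of_ge hsz hWz x hx.out.le
  have h1 : M t < M (t + 1) := msm (show t ∈ Ici z from ht)
    (show t + 1 ∈ Ici z from by simp only [mem_Ici]; linarith) (by linarith)
  have h2 : M (t + 1) ≤ 0 := M_nonpos hsz hWz hx1 hNx1 (t + 1)
    (by linarith [(z_pos hsz hWz).le, ht])
  linarith

lemma H_pos : ∀ ρ : ℝ, 0 ≤ ρ → 0 < H ρ := by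
  intro ρ hρ
  have hanti : AntitoneOn H (Ici (0:ℝ)) := by
    apply antitoneOn_of_deriv_nonpos (convex_Ici _)
      (fun x _ => (hasDerivAt_H x).continuousAt.continuousWithinAt)
      (fun x _ => (hasDerivAt_H x).differentiableAt.differentiableWithinAt)
    intro x hx
    rw [interior_Ici] at hx
    rw [(hasDerivAt_H x).deriv]
    have := M_nonpos hsz hWz hx1 hNx1 x hx.out.le
    linarith
  have key : ∀ t, z ≤ t → 0 < H t := by
    intro t ht
    have hsanti : StrictAntiOn H (Ici z) := by
      apply strictAntiOn_of_deriv_neg (convex_Ici _)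
        (fun x _ => (hasDerivAt_H x).continuousAt.continuousWithinAt)
      intro x hx
      rw [interior_Ici] at hx
      rw [(hasDerivAt_H x).deriv]
      have := M_neg_of_ge hsz hWz hx1 hNx1 x hx.out.le
      linarith
    have h1 : H (t + 1) < H t := hsanti (show t ∈ Ici z from ht)
      (show t + 1 ∈ Ici z from by simp only [mem_Ici]; linarith) (by linarith)
    have h2 : 0 ≤ H (t + 1) := by
      apply le_of_tendsto tendsto_H
      filter_upwards [eventually_ge_atTop (t + 1)] with s hs
      have hz0 := (z_pos hsz hWz).le
      exact hanti (show t + 1 ∈ Ici (0:ℝ) from by simp only [mem_Ici]; linarith)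
        (show s ∈ Ici (0:ℝ) from by simp only [mem_Ici]; linarith) hs
    linarith
  rcases le_total z ρ with h | h
  · exact key ρ h
  · have := hanti (show ρ ∈ Ici (0:ℝ) from hρ) (show z ∈ Ici (0:ℝ) from (z_pos hsz hWz).le) h
    linarith [key z (le_refl z)]

end Main

lemma H_pos_all (ρ : ℝ) (hρ : 0 ≤ ρ) : 0 < H ρ := by
  obtain ⟨z, hsz, hz3, hWz⟩ := exists_z
  obtain ⟨x1, hx1, hNx1⟩ := exists_x1 hsz hWz
  exact H_pos hsz hWz hx1 hNx1 ρ hρ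


end OptThr

/-- Negativity of the derivative of the estimated optimal threshold:
(f + pρ)(f − qρ) < qp, equivalently ((f + pρ)(f − qρ) − qp)/f < 0,
where p = Φ(ρ), q = Φ(−ρ), f = φ(ρ). -/

theorem deriv_optThreshold_neg (ρ : ℝ) (p q f : ℝ)
    (hp : p = stdNormalCDF ρ) (hq : q = stdNormalCDF (-ρ)) (hf : f = stdNormalPDF ρ) :
    (f + p * ρ) * (f - q * ρ) < p * q ∧
      ((f + p * ρ) * (f - q * ρ) - q * p) / f < 0 := by
  have key : (f + p * ρ) * (f - q * ρ) < p * q := by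
    rcases le_total 0 ρ with h | h
    · have := OptThr.H_pos_all ρ h
      unfold OptThr.H at this
      rw [← hp, ← hq, ← hf] at this
      nlinarith
    · have := OptThr.H_pos_all (-ρ) (by linarith)
      unfold OptThr.H at this
      rw [neg_neg, OptThr.F_even, ← hp, ← hq, ← hf] at this
      nlinarith
  refine ⟨key, ?_⟩
  apply div_neg_of_neg_of_pos
  · nlinarith
  · rw [hf]; exact OptThr.F_pos ρ
end

section
/- (Strict monotonicity of the optimal threshold in the favorability of the environment.) The function α̂₀ : ℝ → ℝ defined by α̂₀(ρ) = Φ(ρ)·(1 − ρ·Φ(−ρ)/φ(ρ)) is strictly decreasing on ℝ: for all ρ₁ < ρ₂ one has α̂₀(ρ₁) > α̂₀(ρ₂). In particular, the estimated optimal acceptance threshold increases when the environment becomes less favorable and decreases when it becomes more favorable. -/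
open MeasureTheory ProbabilityTheory

/-- The estimate α̂₀ of the optimal acceptance threshold as a function of the
adjusted mean ρ of the environment. -/
noncomputable def optThreshold (ρ : ℝ) : ℝ :=
  stdNormalCDF ρ * (1 - ρ * stdNormalCDF (-ρ) / stdNormalPDF ρ)

namespace SN

open Real Set Filter

local notation "f" => stdNormalPDF
local notation "U" => stdNormalCDF

lemma pdf_pos (x : ℝ) : 0 < f x := by
  unfold stdNormalPDF
  positivity

lemma pdf_cont : Continuous stdNormalPDF := by
  unfold stdNormalPDF
  continuity

lemma pdf_even (x : ℝ) : f (-x) = f x := by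
  unfold stdNormalPDF; ring_nf

lemma pdf_eq (x : ℝ) : f x = (Real.sqrt (2 * Real.pi))⁻¹ * Real.exp (-(1/2) * x ^ 2) := by
  unfold stdNormalPDF; ring_nf

lemma pdf_fun_eq : stdNormalPDF = fun x => (Real.sqrt (2 * Real.pi))⁻¹ * Real.exp (-(1/2) * x ^ 2) :=
  funext pdf_eq

lemma pdf_integrable : Integrable stdNormalPDF := by
  rw [pdf_fun_eq]
  exact (integrable_exp_neg_mul_sq (by norm_num : (0:ℝ) < 1/2)).const_mul _

lemma pdf_integral : ∫ x, f x = 1 := by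
  have h : ∫ x, f x = (Real.sqrt (2 * Real.pi))⁻¹ * ∫ x, Real.exp (-(1/2) * x ^ 2) := by
    rw [pdf_fun_eq]
    exact MeasureTheory.integral_const_mul _ _
  rw [h, integral_gaussian]
  have h2 : Real.pi / (1/2) = 2 * Real.pi := by ring
  rw [h2]
  rw [inv_mul_cancel₀]
  positivity

lemma hasDerivAt_pdf (x : ℝ) : HasDerivAt stdNormalPDF (-x * f x) x := by
  have h1 : HasDerivAt (fun t : ℝ => -t ^ 2 / 2) (-x) x := by
    have := ((hasDerivAt_pow 2 x).neg).div_const 2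
    simpa using this.congr_deriv (by ring)
  have h2 := (h1.exp).const_mul (Real.sqrt (2 * Real.pi))⁻¹
  have : stdNormalPDF = fun t => (Real.sqrt (2 * Real.pi))⁻¹ * Real.exp (-t ^ 2 / 2) := rfl
  rw [this]
  refine h2.congr_deriv ?_
  show _ = -x * ((Real.sqrt (2 * Real.pi))⁻¹ * Real.exp (-x ^ 2 / 2))
  ring

lemma cdf_sub (a b : ℝ) : U b - U a = ∫ t in a..b, f t := by
  exact intervalIntegral.integral_Iic_sub_Iic pdf_integrable.integrableOn pdf_integrable.integrableOn

lemma hasDerivAt_cdf (x : ℝ) : HasDerivAt stdNormalCDF (f x) x := by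
  have key : stdNormalCDF = fun y => U 0 + ∫ t in (0:ℝ)..y, f t := by
    funext y
    rw [← cdf_sub 0 y]; ring
  rw [key]
  exact (intervalIntegral.integral_hasDerivAt_right
    (pdf_integrable.intervalIntegrable)
    (pdf_cont.stronglyMeasurable.stronglyMeasurableAtFilter)
    pdf_cont.continuousAt).const_add _

lemma cdf_neg_eq (x : ℝ) : U (-x) = ∫ t in Ioi x, f t := by
  have h : U (-x) = ∫ t in Iic (-x), f (-t) := by
    unfold stdNormalCDF
    congr 1
    funext t
    rw [pdf_even]
  rw [h, integral_comp_neg_Iic, neg_neg]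

lemma cdf_add (x : ℝ) : U x + U (-x) = 1 := by
  rw [cdf_neg_eq]
  unfold stdNormalCDF
  rw [intervalIntegral.integral_Iic_add_Ioi pdf_integrable.integrableOn pdf_integrable.integrableOn]
  exact pdf_integral

lemma cdf_pos (x : ℝ) : 0 < U x := by
  unfold stdNormalCDF
  rw [MeasureTheory.setIntegral_pos_iff_support_of_nonneg_ae
    (Filter.Eventually.of_forall (fun t => (pdf_pos t).le)) pdf_integrable.integrableOn]
  have hs : Function.support stdNormalPDF = Set.univ := by
    ext t; simp [Function.mem_support, (pdf_pos t).ne']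
  rw [hs, Set.univ_inter, Real.volume_Iic]
  simp

lemma cdf_lt_one (x : ℝ) : U x < 1 := by
  have := cdf_add x
  have := cdf_pos (-x)
  linarith

lemma cdf_strict (a b : ℝ) (hab : a < b) : U a < U b := by
  have h : U b - U a = ∫ t in a..b, f t := cdf_sub a b
  have hpos : 0 < ∫ t in a..b, f t :=
    intervalIntegral.intervalIntegral_pos_of_pos (pdf_integrable.intervalIntegrable) pdf_pos hab
  linarith
lemma tendsto_pdf : Tendsto stdNormalPDF atTop (nhds 0) := by
  rw [pdf_fun_eq]
  have h1 : Tendsto (fun x : ℝ => -(1/2) * x ^ 2) atTop atBot := by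
    apply Tendsto.const_mul_atTop_of_neg (by norm_num : (-(1/2) : ℝ) < 0)
    exact tendsto_pow_atTop (by norm_num)
  have h2 := Real.tendsto_exp_atBot.comp h1
  have := h2.const_mul (Real.sqrt (2 * Real.pi))⁻¹
  simpa using this

lemma mul_pdf_integrable : Integrable (fun t : ℝ => t * f t) := by
  rw [pdf_fun_eq]
  have h := (integrable_mul_exp_neg_mul_sq (by norm_num : (0:ℝ) < 1/2)).const_mul
    (Real.sqrt (2 * Real.pi))⁻¹
  apply h.congr
  apply Filter.Eventually.of_forall
  intro x
  simp only
  ring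

lemma integral_Ioi_mul_pdf (x : ℝ) : ∫ t in Ioi x, t * f t = f x := by
  have hderiv : ∀ t ∈ Ici x, HasDerivAt (fun s => -f s) (t * f t) t := by
    intro t _
    have := (hasDerivAt_pdf t).neg
    exact this.congr_deriv (by ring)
  have hlim : Tendsto (fun s => -f s) atTop (nhds 0) := by
    simpa using tendsto_pdf.neg
  have h := MeasureTheory.integral_Ioi_of_hasDerivAt_of_tendsto' hderiv
    (mul_pdf_integrable.integrableOn) hlim
  rw [h]; ring

lemma mills (x : ℝ) (hx : 0 < x) : x * U (-x) < f x := by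
  have key : f x - x * U (-x) = ∫ t in Ioi x, (t - x) * f t := by
    have h1 : ∫ t in Ioi x, (t - x) * f t
        = (∫ t in Ioi x, t * f t) - ∫ t in Ioi x, x * f t := by
      rw [← MeasureTheory.integral_sub (mul_pdf_integrable.integrableOn)
        ((pdf_integrable.integrableOn).const_mul x)]
      congr 1; funext t; ring
    rw [h1, integral_Ioi_mul_pdf, MeasureTheory.integral_const_mul, ← cdf_neg_eq]
  have hpos : 0 < ∫ t in Ioi x, (t - x) * f t := by
    rw [MeasureTheory.setIntegral_pos_iff_support_of_nonneg_ae]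
    · have hsub : Ioi x ⊆ Function.support (fun t => (t - x) * f t) ∪ {x} := by
        intro t ht
        left
        simp only [Function.mem_support]
        exact mul_ne_zero (by simp [sub_ne_zero]; exact ne_of_gt ht) (pdf_pos t).ne'
      have : volume (Function.support (fun t => (t - x) * f t) ∩ Ioi x) = volume (Ioi x) := by
        apply le_antisymm (measure_mono Set.inter_subset_right)
        calc volume (Ioi x) = volume (Ioi x \ {x}) :=
              (measure_diff_null (measure_singleton x)).symm
          _ ≤ volume (Function.support (fun t => (t - x) * f t) ∩ Ioi x) := by
              apply measure_mono
              intro t ⟨ht1, ht2⟩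
              refine ⟨?_, ht1⟩
              simp only [Function.mem_support]
              have : t ≠ x := by simpa using ht2
              exact mul_ne_zero (sub_ne_zero.mpr this) (pdf_pos t).ne'
      rw [this, Real.volume_Ioi]
      simp
    · filter_upwards [MeasureTheory.ae_restrict_mem measurableSet_Ioi] with t ht
      have h2 : (0:ℝ) ≤ t - x := by simp at ht; linarith
      show (0:ℝ) ≤ (t - x) * f t
      exact mul_nonneg h2 (pdf_pos t).le
    · apply Integrable.integrableOn
      have := mul_pdf_integrable.sub (pdf_integrable.const_mul x)
      apply this.congr
      apply Filter.Eventually.of_forall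
      intro t; simp only [Pi.sub_apply]; ring
  linarith
lemma tendsto_sq_mul_pdf : Tendsto (fun x : ℝ => x ^ 2 * f x) atTop (nhds 0) := by
  have h1 : Tendsto (fun x : ℝ => x ^ 2 / 2) atTop atTop := by
    apply Filter.Tendsto.atTop_div_const (by norm_num)
    exact tendsto_pow_atTop (by norm_num)
  have h2 := (tendsto_pow_mul_exp_neg_atTop_nhds_zero 1).comp h1
  have h3 : Tendsto (fun x : ℝ => (x ^ 2 / 2) * Real.exp (-(x ^ 2 / 2))) atTop (nhds 0) := by
    simpa [Function.comp_def] using h2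
  have h4 := h3.const_mul (2 * (Real.sqrt (2 * Real.pi))⁻¹)
  rw [mul_zero] at h4
  apply h4.congr
  intro x
  unfold stdNormalPDF
  rw [neg_div]
  ring

lemma squeeze_zero' {g h : ℝ → ℝ} (hg : ∀ᶠ x in atTop, 0 ≤ g x) (hgh : ∀ᶠ x in atTop, g x ≤ h x)
    (hh : Tendsto h atTop (nhds 0)) : Tendsto g atTop (nhds 0) :=
  tendsto_of_tendsto_of_tendsto_of_le_of_le' tendsto_const_nhds hh hg hgh

lemma tendsto_mul_pdf : Tendsto (fun x : ℝ => x * f x) atTop (nhds 0) := by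
  apply squeeze_zero' (g := fun x => x * f x) (h := fun x => x ^ 2 * f x)
  · filter_upwards [Filter.eventually_ge_atTop (0:ℝ)] with x hx
    exact mul_nonneg hx (pdf_pos x).le
  · filter_upwards [Filter.eventually_ge_atTop (1:ℝ)] with x hx
    have : x ≤ x ^ 2 := by nlinarith
    exact mul_le_mul_of_nonneg_right this (pdf_pos x).le
  · exact tendsto_sq_mul_pdf

lemma tendsto_cdf_neg : Tendsto (fun x : ℝ => U (-x)) atTop (nhds 0) := by
  apply squeeze_zero'
  · filter_upwards with x; exact (cdf_pos (-x)).le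
  · filter_upwards [Filter.eventually_ge_atTop (1:ℝ)] with x hx
    have h1 := mills x (by linarith)
    have h2 := cdf_pos (-x)
    nlinarith
  · exact tendsto_pdf

lemma tendsto_mul_cdf_neg : Tendsto (fun x : ℝ => x * U (-x)) atTop (nhds 0) := by
  apply squeeze_zero'
  · filter_upwards [Filter.eventually_ge_atTop (0:ℝ)] with x hx
    exact mul_nonneg hx (cdf_pos (-x)).le
  · filter_upwards [Filter.eventually_ge_atTop (1:ℝ)] with x hx
    exact (mills x (by linarith)).le
  · exact tendsto_pdf

lemma tendsto_sq_mul_cdf_neg : Tendsto (fun x : ℝ => x ^ 2 * U (-x)) atTop (nhds 0) := by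
  apply squeeze_zero'
  · filter_upwards [Filter.eventually_ge_atTop (0:ℝ)] with x hx
    exact mul_nonneg (by positivity) (cdf_pos (-x)).le
  · filter_upwards [Filter.eventually_ge_atTop (1:ℝ)] with x hx
    have h1 := mills x (by linarith)
    have hx0 : (0:ℝ) < x := by linarith
    calc x ^ 2 * U (-x) = x * (x * U (-x)) := by ring
      _ ≤ x * f x := by nlinarith
  · exact tendsto_mul_pdf

lemma tendsto_cdf_one : Tendsto stdNormalCDF atTop (nhds 1) := by
  have h : Tendsto (fun x : ℝ => 1 - U (-x)) atTop (nhds (1 - 0)) :=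
    tendsto_const_nhds.sub tendsto_cdf_neg
  rw [sub_zero] at h
  apply h.congr
  intro x
  have := cdf_add x
  linarith
noncomputable def Vf (x : ℝ) : ℝ := stdNormalCDF (-x)
noncomputable def Df (x : ℝ) : ℝ := stdNormalCDF x - Vf x
noncomputable def Gf (x : ℝ) : ℝ := (1 + x^2) * U x * Vf x - x * f x * Df x - f x ^ 2
noncomputable def Kf (x : ℝ) : ℝ := f x * Df x - x * U x * Vf x
noncomputable def K'f (x : ℝ) : ℝ := 2 * f x ^ 2 - U x * Vf x
noncomputable def Mf (x : ℝ) : ℝ := 2 * x * U x * Vf x - f x * Df x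
noncomputable def M'f (x : ℝ) : ℝ := 2 * U x * Vf x - x * f x * Df x - 2 * f x ^ 2
noncomputable def hf (x : ℝ) : ℝ := (x^2 - 3) * Df x + 2 * x * f x
noncomputable def h'f (x : ℝ) : ℝ := 2 * x * Df x - 4 * f x
noncomputable def psi (x : ℝ) : ℝ := U x * Vf x / f x ^ 2

lemma hasDerivAt_V (x : ℝ) : HasDerivAt Vf (-f x) x := by
  have h := (hasDerivAt_cdf (-x)).comp x (hasDerivAt_neg x)
  have : Vf = fun y => stdNormalCDF (-y) := rfl
  rw [this]
  refine h.congr_deriv ?_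
  rw [pdf_even]; ring

lemma hasDerivAt_D (x : ℝ) : HasDerivAt Df (2 * f x) x := by
  have h := (hasDerivAt_cdf x).sub (hasDerivAt_V x)
  have : Df = fun y => stdNormalCDF y - Vf y := rfl
  rw [this]
  refine h.congr_deriv ?_
  ring

lemma hasDerivAt_sq (x : ℝ) : HasDerivAt (fun y : ℝ => y ^ 2) (2 * x) x := by
  simpa using hasDerivAt_pow 2 x

lemma hasDerivAt_G (x : ℝ) : HasDerivAt Gf (-2 * Kf x) x := by
  have h1 : HasDerivAt (fun y : ℝ => (1 + y^2) * U y * Vf y)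
      ((2*x * U x + (1 + x^2) * f x) * Vf x + (1 + x^2) * U x * (-f x)) x :=
    ((((hasDerivAt_sq x).const_add 1).mul (hasDerivAt_cdf x)).mul (hasDerivAt_V x))
  have h2 : HasDerivAt (fun y : ℝ => y * f y * Df y)
      (((1 : ℝ) * f x + x * (-x * f x)) * Df x + x * f x * (2 * f x)) x :=
    (((hasDerivAt_id x).mul (hasDerivAt_pdf x)).mul (hasDerivAt_D x))
  have h3 : HasDerivAt (fun y : ℝ => f y ^ 2) (2 * f x ^ 1 * (-x * f x)) x :=
    (hasDerivAt_pdf x).pow 2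
  have h := (h1.sub h2).sub h3
  have : Gf = fun y => (1 + y^2) * U y * Vf y - y * f y * Df y - f y ^ 2 := rfl
  rw [this]
  refine h.congr_deriv ?_
  unfold Kf Df
  ring

lemma hasDerivAt_K (x : ℝ) : HasDerivAt Kf (K'f x) x := by
  have h1 : HasDerivAt (fun y : ℝ => f y * Df y)
      ((-x * f x) * Df x + f x * (2 * f x)) x := (hasDerivAt_pdf x).mul (hasDerivAt_D x)
  have h2 : HasDerivAt (fun y : ℝ => y * U y * Vf y)
      (((1:ℝ) * U x + x * f x) * Vf x + x * U x * (-f x)) x :=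
    (((hasDerivAt_id x).mul (hasDerivAt_cdf x)).mul (hasDerivAt_V x))
  have h := h1.sub h2
  have : Kf = fun y => f y * Df y - y * U y * Vf y := rfl
  rw [this]
  refine h.congr_deriv ?_
  unfold K'f Df
  ring

lemma hasDerivAt_M (x : ℝ) : HasDerivAt Mf (M'f x) x := by
  have h1 : HasDerivAt (fun y : ℝ => 2 * y * U y * Vf y)
      ((((2:ℝ) * 1) * U x + 2 * x * f x) * Vf x + 2 * x * U x * (-f x)) x :=
    ((((hasDerivAt_id x).const_mul 2).mul (hasDerivAt_cdf x)).mul (hasDerivAt_V x))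
  have h2 : HasDerivAt (fun y : ℝ => f y * Df y)
      ((-x * f x) * Df x + f x * (2 * f x)) x := (hasDerivAt_pdf x).mul (hasDerivAt_D x)
  have h := h1.sub h2
  have : Mf = fun y => 2 * y * U y * Vf y - f y * Df y := rfl
  rw [this]
  refine h.congr_deriv ?_
  unfold M'f Df
  ring

lemma hasDerivAt_M' (x : ℝ) : HasDerivAt M'f (f x * hf x) x := by
  have h1 : HasDerivAt (fun y : ℝ => 2 * U y * Vf y)
      (((2:ℝ) * f x) * Vf x + 2 * U x * (-f x)) x :=
    (((hasDerivAt_cdf x).const_mul 2).mul (hasDerivAt_V x))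
  have h2 : HasDerivAt (fun y : ℝ => y * f y * Df y)
      (((1 : ℝ) * f x + x * (-x * f x)) * Df x + x * f x * (2 * f x)) x :=
    (((hasDerivAt_id x).mul (hasDerivAt_pdf x)).mul (hasDerivAt_D x))
  have h3 : HasDerivAt (fun y : ℝ => 2 * f y ^ 2) (2 * (2 * f x ^ 1 * (-x * f x))) x :=
    ((hasDerivAt_pdf x).pow 2).const_mul 2
  have h := (h1.sub h2).sub h3
  have : M'f = fun y => 2 * U y * Vf y - y * f y * Df y - 2 * f y ^ 2 := rfl
  rw [this]
  refine h.congr_deriv ?_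
  unfold hf Df
  ring

lemma hasDerivAt_h (x : ℝ) : HasDerivAt hf (h'f x) x := by
  have h1 : HasDerivAt (fun y : ℝ => (y^2 - 3) * Df y)
      (2*x * Df x + (x^2 - 3) * (2 * f x)) x :=
    (((hasDerivAt_sq x).sub_const 3).mul (hasDerivAt_D x))
  have h2 : HasDerivAt (fun y : ℝ => 2 * y * f y)
      (((2:ℝ) * 1) * f x + 2 * x * (-x * f x)) x :=
    (((hasDerivAt_id x).const_mul 2).mul (hasDerivAt_pdf x))
  have h := h1.add h2
  have : hf = fun y => (y^2 - 3) * Df y + 2 * y * f y := rfl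
  rw [this]
  refine h.congr_deriv ?_
  unfold h'f Df
  ring

lemma hasDerivAt_h' (x : ℝ) : HasDerivAt h'f (2 * Df x + 8 * x * f x) x := by
  have h1 : HasDerivAt (fun y : ℝ => 2 * y * Df y)
      (((2:ℝ) * 1) * Df x + 2 * x * (2 * f x)) x :=
    (((hasDerivAt_id x).const_mul 2).mul (hasDerivAt_D x))
  have h2 : HasDerivAt (fun y : ℝ => 4 * f y) (4 * (-x * f x)) x :=
    (hasDerivAt_pdf x).const_mul 4
  have h := h1.sub h2
  have : h'f = fun y => 2 * y * Df y - 4 * f y := rfl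
  rw [this]
  refine h.congr_deriv ?_
  ring

lemma hasDerivAt_psi (x : ℝ) : HasDerivAt psi (Mf x / f x ^ 2) x := by
  have hne : f x ^ 2 ≠ 0 := by have := pdf_pos x; positivity
  have h1 : HasDerivAt (fun y : ℝ => U y * Vf y) (f x * Vf x + U x * (-f x)) x :=
    (hasDerivAt_cdf x).mul (hasDerivAt_V x)
  have h3 : HasDerivAt (fun y : ℝ => f y ^ 2) (2 * f x ^ 1 * (-x * f x)) x :=
    (hasDerivAt_pdf x).pow 2
  have h := h1.div h3 hne
  have : psi = fun y => U y * Vf y / f y ^ 2 := rfl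
  rw [this]
  refine h.congr_deriv ?_
  unfold Mf Df
  have hfne : f x ≠ 0 := (pdf_pos x).ne'
  field_simp
  ring
lemma tendsto_D : Tendsto Df atTop (nhds 1) := by
  have h := tendsto_cdf_one.sub tendsto_cdf_neg
  rw [sub_zero] at h
  exact h

lemma tendsto_UV : Tendsto (fun x => U x * Vf x) atTop (nhds 0) := by
  have h := tendsto_cdf_one.mul tendsto_cdf_neg
  rw [one_mul] at h
  exact h

lemma tendsto_xUV : Tendsto (fun x => x * U x * Vf x) atTop (nhds 0) := by
  have h := tendsto_mul_cdf_neg.mul tendsto_cdf_one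
  rw [zero_mul] at h
  exact h.congr (fun x => by show x * U (-x) * U x = _; unfold Vf; ring)

lemma tendsto_x2UV : Tendsto (fun x => x^2 * U x * Vf x) atTop (nhds 0) := by
  have h := tendsto_sq_mul_cdf_neg.mul tendsto_cdf_one
  rw [zero_mul] at h
  exact h.congr (fun x => by show x ^ 2 * U (-x) * U x = _; unfold Vf; ring)

lemma tendsto_fD : Tendsto (fun x => f x * Df x) atTop (nhds 0) := by
  have h := tendsto_pdf.mul tendsto_D
  rw [zero_mul] at h
  exact h

lemma tendsto_xfD : Tendsto (fun x => x * f x * Df x) atTop (nhds 0) := by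
  have h := tendsto_mul_pdf.mul tendsto_D
  rw [zero_mul] at h
  exact h

lemma tendsto_f2 : Tendsto (fun x => f x ^ 2) atTop (nhds 0) := by
  have h := tendsto_pdf.mul tendsto_pdf
  rw [zero_mul] at h
  exact h.congr (fun x => (sq (f x)).symm)

lemma tendsto_M' : Tendsto M'f atTop (nhds 0) := by
  have h := ((tendsto_UV.const_mul 2).sub tendsto_xfD).sub (tendsto_f2.const_mul 2)
  norm_num at h
  exact h.congr (fun x => by unfold M'f; ring)

lemma tendsto_M : Tendsto Mf atTop (nhds 0) := by
  have h := (tendsto_xUV.const_mul 2).sub tendsto_fD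
  norm_num at h
  exact h.congr (fun x => by unfold Mf; ring)

lemma tendsto_K : Tendsto Kf atTop (nhds 0) := by
  have h := tendsto_fD.sub tendsto_xUV
  norm_num at h
  exact h.congr (fun x => by unfold Kf; ring)

lemma tendsto_G : Tendsto Gf atTop (nhds 0) := by
  have h := ((tendsto_UV.add tendsto_x2UV).sub tendsto_xfD).sub tendsto_f2
  norm_num at h
  exact h.congr (fun x => by unfold Gf; ring)

section helpers

variable {g g' : ℝ → ℝ} {a L x : ℝ}

lemma cont_of_deriv (hd : ∀ x, HasDerivAt g (g' x) x) : Continuous g :=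
  Differentiable.continuous (fun x => (hd x).differentiableAt)

lemma strictAntiOn_Ici_of (hd : ∀ x, HasDerivAt g (g' x) x) (a : ℝ)
    (hneg : ∀ x, a < x → g' x < 0) : StrictAntiOn g (Ici a) :=
  strictAntiOn_of_deriv_neg (convex_Ici a) (cont_of_deriv hd).continuousOn
    (fun x hx => by rw [interior_Ici] at hx; rw [(hd x).deriv]; exact hneg x hx)

lemma strictMonoOn_Ici_of (hd : ∀ x, HasDerivAt g (g' x) x) (a : ℝ)
    (hpos : ∀ x, a < x → 0 < g' x) : StrictMonoOn g (Ici a) :=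
  strictMonoOn_of_deriv_pos (convex_Ici a) (cont_of_deriv hd).continuousOn
    (fun x hx => by rw [interior_Ici] at hx; rw [(hd x).deriv]; exact hpos x hx)

lemma strictAntiOn_Icc_of (hd : ∀ x, HasDerivAt g (g' x) x) {a b : ℝ}
    (hneg : ∀ x, a < x → x < b → g' x < 0) : StrictAntiOn g (Icc a b) :=
  strictAntiOn_of_deriv_neg (convex_Icc a b) (cont_of_deriv hd).continuousOn
    (fun x hx => by rw [interior_Icc] at hx; rw [(hd x).deriv]; exact hneg x hx.1 hx.2)

lemma strictMonoOn_Icc_of (hd : ∀ x, HasDerivAt g (g' x) x) {a b : ℝ}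
    (hpos : ∀ x, a < x → x < b → 0 < g' x) : StrictMonoOn g (Icc a b) :=
  strictMonoOn_of_deriv_pos (convex_Icc a b) (cont_of_deriv hd).continuousOn
    (fun x hx => by rw [interior_Icc] at hx; rw [(hd x).deriv]; exact hpos x hx.1 hx.2)

lemma lt_limit (hanti : StrictAntiOn g (Ici a)) (hlim : Tendsto g atTop (nhds L))
    (hx : a ≤ x) : L < g x := by
  have h1 : g (x + 1) < g x :=
    hanti (by simpa using hx) (by simp; linarith) (lt_add_one x)
  have h2 : L ≤ g (x + 1) := by
    apply le_of_tendsto hlim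
    filter_upwards [eventually_ge_atTop (x + 1)] with z hz
    rcases eq_or_lt_of_le hz with h | h
    · rw [← h]
    · exact (hanti (by simp; linarith) (by simp; linarith) h).le
  linarith

lemma limit_lt (hmono : StrictMonoOn g (Ici a)) (hlim : Tendsto g atTop (nhds L))
    (hx : a ≤ x) : g x < L := by
  have h1 : g x < g (x + 1) :=
    hmono (by simpa using hx) (by simp; linarith) (lt_add_one x)
  have h2 : g (x + 1) ≤ L := by
    apply ge_of_tendsto hlim
    filter_upwards [eventually_ge_atTop (x + 1)] with z hz
    rcases eq_or_lt_of_le hz with h | h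
    · rw [← h]
    · exact (hmono (by simp; linarith) (by simp; linarith) h).le
  linarith

lemma humpPos (hd : ∀ x, HasDerivAt g (g' x) x) (h0 : g 0 = 0)
    (hlim : Tendsto g atTop (nhds 0))
    (hcross : ∀ a b, 0 < a → a < b → g' a ≤ 0 → g' b < 0) :
    ∀ x, 0 < x → 0 < g x := by
  intro x hx
  by_cases hpos : ∀ t, 0 < t → t < x → 0 < g' t
  · have hmono : StrictMonoOn g (Icc 0 x) := strictMonoOn_Icc_of hd hpos
    have := hmono (Set.left_mem_Icc.mpr hx.le) (Set.right_mem_Icc.mpr hx.le) hx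
    linarith [h0 ▸ this]
  · push_neg at hpos
    obtain ⟨t, ht1, ht2, ht3⟩ := hpos
    have hanti : StrictAntiOn g (Ici x) :=
      strictAntiOn_Ici_of hd x (fun s hs => hcross t s ht1 (by linarith) ht3)
    exact lt_limit hanti hlim le_rfl

end helpers

lemma Df_zero : Df 0 = 0 := by unfold Df Vf; rw [neg_zero, sub_self]

lemma Df_pos {x : ℝ} (hx : 0 < x) : 0 < Df x := by
  have := cdf_strict (-x) x (by linarith)
  unfold Df Vf
  linarith

lemma h'_mono : StrictMonoOn h'f (Ici 0) := by
  apply strictMonoOn_Ici_of hasDerivAt_h' 0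
  intro x hx
  have h1 := Df_pos hx
  have h2 := pdf_pos x
  nlinarith

lemma h_cross : ∀ s t, 0 < s → s < t → 0 ≤ hf s → 0 < hf t := by
  intro s t hs hst hhs
  have hf0 : hf 0 = 0 := by unfold hf; rw [Df_zero]; ring
  have h's : 0 < h'f s := by
    by_contra hc
    push_neg at hc
    have hanti : StrictAntiOn hf (Icc 0 s) := by
      apply strictAntiOn_Icc_of hasDerivAt_h
      intro y hy1 hy2
      have := h'_mono (by simp; linarith : y ∈ Ici (0:ℝ)) (by simp; linarith : s ∈ Ici (0:ℝ)) hy2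
      linarith
    have := hanti (Set.left_mem_Icc.mpr hs.le) (Set.right_mem_Icc.mpr hs.le) hs
    rw [hf0] at this
    linarith
  have hmono : StrictMonoOn hf (Ici s) := by
    apply strictMonoOn_Ici_of hasDerivAt_h s
    intro y hy
    have := h'_mono (by simp; linarith : s ∈ Ici (0:ℝ)) (by simp; linarith : y ∈ Ici (0:ℝ)) hy
    linarith
  have := hmono Set.self_mem_Ici (by simp; linarith : t ∈ Ici s) hst
  linarith

lemma M'_cross : ∀ a b, 0 < a → a < b → M'f a ≤ 0 → M'f b < 0 := by
  intro a b ha hab hMa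
  by_cases hc : ∀ s, 0 < s → s < b → hf s < 0
  · have hanti : StrictAntiOn M'f (Icc 0 b) := by
      apply strictAntiOn_Icc_of hasDerivAt_M'
      intro y hy1 hy2
      exact mul_neg_of_pos_of_neg (pdf_pos y) (hc y hy1 hy2)
    have := hanti (by constructor <;> linarith : a ∈ Icc 0 b)
      (Set.right_mem_Icc.mpr (by linarith)) hab
    linarith
  · push_neg at hc
    obtain ⟨s, hs1, hs2, hs3⟩ := hc
    have hmono : StrictMonoOn M'f (Ici s) := by
      apply strictMonoOn_Ici_of hasDerivAt_M' s
      intro y hy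
      exact mul_pos (pdf_pos y) (h_cross s y hs1 hy hs3)
    exact limit_lt hmono tendsto_M' (by linarith : s ≤ b)

lemma M_pos : ∀ x, 0 < x → 0 < Mf x := by
  apply humpPos hasDerivAt_M
  · unfold Mf; rw [Df_zero]; ring
  · exact tendsto_M
  · exact M'_cross

lemma psi_mono : StrictMonoOn psi (Ici 0) := by
  apply strictMonoOn_Ici_of hasDerivAt_psi 0
  intro x hx
  have h2 := pdf_pos x
  exact div_pos (M_pos x hx) (by positivity)

lemma K_cross : ∀ a b, 0 < a → a < b → K'f a ≤ 0 → K'f b < 0 := by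
  intro a b ha hab hKa
  have hfa := pdf_pos a
  have hfb := pdf_pos b
  have hpa : 2 ≤ psi a := by
    unfold psi
    rw [le_div_iff₀ (by positivity)]
    unfold K'f at hKa
    linarith
  have hpb : 2 < psi b :=
    lt_of_le_of_lt hpa (psi_mono (by simp; linarith : a ∈ Ici (0:ℝ))
      (by simp; linarith : b ∈ Ici (0:ℝ)) hab)
  unfold psi at hpb
  rw [lt_div_iff₀ (by positivity)] at hpb
  unfold K'f
  linarith

lemma K_pos : ∀ x, 0 < x → 0 < Kf x := by
  apply humpPos hasDerivAt_K
  · unfold Kf; rw [Df_zero]; ring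
  · exact tendsto_K
  · exact K_cross

lemma G_nonneg_pos : ∀ x, 0 ≤ x → 0 < Gf x := by
  intro x hx
  have hanti : StrictAntiOn Gf (Ici 0) := by
    apply strictAntiOn_Ici_of hasDerivAt_G 0
    intro y hy
    have := K_pos y hy
    linarith
  exact lt_limit hanti tendsto_G hx

lemma G_even (x : ℝ) : Gf (-x) = Gf x := by
  unfold Gf Df Vf
  rw [neg_neg, pdf_even]
  ring

lemma G_pos (x : ℝ) : 0 < Gf x := by
  rcases le_or_gt 0 x with h | h
  · exact G_nonneg_pos x h
  · have := G_nonneg_pos (-x) (by linarith)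
    rw [G_even] at this
    exact this
lemma hasDerivAt_opt (x : ℝ) : HasDerivAt optThreshold (-Gf x / f x) x := by
  have hfne : f x ≠ 0 := (pdf_pos x).ne'
  have h1 : HasDerivAt (fun y : ℝ => y * Vf y) ((1:ℝ) * Vf x + x * (-f x)) x :=
    (hasDerivAt_id x).mul (hasDerivAt_V x)
  have h2 : HasDerivAt (fun y : ℝ => y * Vf y / f y)
      ((((1:ℝ) * Vf x + x * (-f x)) * f x - x * Vf x * (-x * f x)) / f x ^ 2) x :=
    h1.div (hasDerivAt_pdf x) hfne
  have h3 : HasDerivAt (fun y : ℝ => 1 - y * Vf y / f y)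
      (-((((1:ℝ) * Vf x + x * (-f x)) * f x - x * Vf x * (-x * f x)) / f x ^ 2)) x :=
    h2.const_sub 1
  have h4 := (hasDerivAt_cdf x).mul h3
  have key : optThreshold = fun y => stdNormalCDF y * (1 - y * Vf y / f y) := rfl
  rw [key]
  refine h4.congr_deriv ?_
  unfold Gf Df
  field_simp
  ring

theorem optThreshold_strictAnti' : StrictAnti optThreshold := by
  apply strictAnti_of_deriv_neg
  intro x
  rw [(hasDerivAt_opt x).deriv]
  exact div_neg_of_neg_of_pos (neg_lt_zero.mpr (G_pos x)) (pdf_pos x)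

end SN

/-- The estimated optimal acceptance threshold is strictly decreasing in the
favorability ρ of the environment. -/
theorem optThreshold_strictAnti : StrictAnti optThreshold :=
  SN.optThreshold_strictAnti'
end
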